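/- Let d ≥ 1, T > 0, and let p : ℝ × ℝ^d × ℝ × ℝ^d → [0,∞), written p(t, y | s, x), be a measurable family of transition densities satisfying the Chapman–Kolmogorov equations: for all s < t < u and all x, z ∈ ℝ^d, ∫_{ℝ^d} p(t, y | s, x) · p(u, z | t, y) dy = p(u, z | s, x). Let ν be a finite measure on ℝ^d, q : ℝ^d → [0,∞) measurable, and h(t, x) = ∫_{ℝ^d} p(T, y | t, x) q(y) ν(dy). Fix x₀ ∈ ℝ^d with 0 < h(0, x₀) < ∞, and times 0 = t₀ < t₁ ≤ t₂ ≤ … ≤ t_n < T. Assume p(T, y | 0, x₀) > 0 for ν-almost every y with q(y) > 0. Let ξ be the measure on ℝ^d defined by ξ(dy) = p(T, y | 0, x₀) q(y) ν(dy) / h(0, x₀). Then for every measurable g : (ℝ^d)^n → [0,∞]: ∫_{(ℝ^d)^n} g(x₁,…,x_n) [∏_{i=1}^n p(t_i, x_i | t_{i−1}, x_{i−1})] · (h(t_n, x_n)/h(0, x₀)) dx₁…dx_n = ∫_{ℝ^d} ( ∫_{(ℝ^d)^n} g(x₁,…,x_n) [∏_{i=1}^n p(t_i, x_i | t_{i−1},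 x_{i−1})] · (p(T, y | t_n, x_n)/p(T, y | 0, x₀)) dx₁…dx_n ) ξ(dy). -/

import Mathlib

open MeasureTheory ENNReal NNReal

/-- The `h`-function of Doob's `h`-transform:
`h(t, x) = ∫ p(T, y | t, x) q(y) ν(dy)`. -/
noncomputable def doobH {d : ℕ}
    (p : ℝ → (Fin d → ℝ) → ℝ → (Fin d → ℝ) → ℝ≥0)
    (q : (Fin d → ℝ) → ℝ≥0) (ν : Measure (Fin d → ℝ))
    (T t : ℝ) (x : Fin d → ℝ) : ℝ≥0∞ :=
  ∫⁻ y, (p T y t x : ℝ≥0∞) * (q y : ℝ≥0∞) ∂ν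

/-- Decomposition of the finite-dimensional distributions of the conditioned
(`h`-transformed) process as a mixture over the endpoint `y ∼ ξ` of the
finite-dimensional distributions of the bridge pinned at `X_T = y`. -/
theorem conditioned_fdd_decomposition {d : ℕ} (hd : 1 ≤ d) (T : ℝ) (hT : 0 < T)
    (p : ℝ → (Fin d → ℝ) → ℝ → (Fin d → ℝ) → ℝ≥0)
    (hp : Measurable (fun w : ℝ × (Fin d → ℝ) × ℝ × (Fin d → ℝ) =>
      p w.1 w.2.1 w.2.2.1 w.2.2.2))
    (hCK : ∀ s t u : ℝ, s < t → t < u → ∀ x z : Fin d → ℝ,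
      ∫⁻ y, (p t y s x : ℝ≥0∞) * (p u z t y : ℝ≥0∞) = (p u z s x : ℝ≥0∞))
    (ν : Measure (Fin d → ℝ)) [IsFiniteMeasure ν]
    (q : (Fin d → ℝ) → ℝ≥0) (hq : Measurable q)
    (x₀ : Fin d → ℝ)
    (hh0pos : 0 < doobH p q ν T 0 x₀) (hh0fin : doobH p q ν T 0 x₀ < ⊤)
    (n : ℕ) (hn : 1 ≤ n) (t : Fin (n + 1) → ℝ)
    (ht0 : t 0 = 0) (ht01 : t 0 < t 1) (htmono : Monotone t)
    (htn : t (Fin.last n) < T)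
    (hppos : ∀ᵐ y ∂ν, 0 < q y → 0 < p T y 0 x₀) :
    ∀ g : ((Fin n → Fin d → ℝ) → ℝ≥0∞), Measurable g →
      (∫⁻ x : Fin n → Fin d → ℝ,
          g x *
          (∏ i : Fin n, (p (t i.succ) (Matrix.vecCons x₀ x i.succ)
              (t i.castSucc) (Matrix.vecCons x₀ x i.castSucc) : ℝ≥0∞)) *
          (doobH p q ν T (t (Fin.last n)) (Matrix.vecCons x₀ x (Fin.last n)) /
            doobH p q ν T 0 x₀))
      = ∫⁻ y,
          (∫⁻ x : Fin n → Fin d → ℝ,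
            g x *
            (∏ i : Fin n, (p (t i.succ) (Matrix.vecCons x₀ x i.succ)
                (t i.castSucc) (Matrix.vecCons x₀ x i.castSucc) : ℝ≥0∞)) *
            ((p T y (t (Fin.last n)) (Matrix.vecCons x₀ x (Fin.last n)) : ℝ≥0∞) /
              (p T y 0 x₀ : ℝ≥0∞)))
          ∂(ν.withDensity fun y =>
              (p T y 0 x₀ : ℝ≥0∞) * (q y : ℝ≥0∞) / doobH p q ν T 0 x₀) := by
  intro g hg
  set h0 : ℝ≥0∞ := doobH p q ν T 0 x₀ with hh0
  have h0ne : h0 ≠ 0 := hh0pos.ne'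
  have h0top : h0 ≠ ⊤ := hh0fin.ne
  -- abbreviations
  set A : (Fin n → Fin d → ℝ) → ℝ≥0∞ := fun x =>
    g x * (∏ i : Fin n, (p (t i.succ) (Matrix.vecCons x₀ x i.succ)
      (t i.castSucc) (Matrix.vecCons x₀ x i.castSucc) : ℝ≥0∞)) with hA
  set c : (Fin d → ℝ) → ℝ≥0∞ := fun y => (p T y 0 x₀ : ℝ≥0∞) with hc
  set pe : (Fin n → Fin d → ℝ) → (Fin d → ℝ) → ℝ≥0∞ := fun x y =>
    (p T y (t (Fin.last n)) (Matrix.vecCons x₀ x (Fin.last n)) : ℝ≥0∞) with hpe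
  -- measurability of the cons map
  have mcons : Measurable (fun x : Fin n → (Fin d → ℝ) => Matrix.vecCons x₀ x) := by
    apply measurable_pi_iff.mpr
    intro j
    refine Fin.cases ?_ ?_ j
    · simpa using (measurable_const : Measurable fun _ : Fin n → Fin d → ℝ => x₀)
    · intro i; simpa using measurable_pi_apply i
  have mA : Measurable A := by
    apply hg.mul
    apply Finset.measurable_prod
    intro i _
    apply Measurable.coe_nnreal_ennreal
    exact hp.comp (measurable_const.prodMk
      (((measurable_pi_apply i.succ).comp mcons).prodMk
        (measurable_const.prodMk ((measurable_pi_apply i.castSucc).comp mcons))))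
  have mc : Measurable c :=
    Measurable.coe_nnreal_ennreal <| hp.comp
      (measurable_const.prodMk (measurable_id.prodMk
        (measurable_const.prodMk measurable_const)))
  -- joint measurability of (y, x) ↦ pe x y
  have mpe2 : Measurable (fun z : (Fin d → ℝ) × (Fin n → Fin d → ℝ) => pe z.2 z.1) :=
    Measurable.coe_nnreal_ennreal <| hp.comp
      (measurable_const.prodMk (measurable_fst.prodMk
        (measurable_const.prodMk
          ((measurable_pi_apply (Fin.last n)).comp (mcons.comp measurable_snd)))))
  have mpe1 : ∀ x, Measurable (fun y => pe x y) := fun x =>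
    mpe2.comp ((measurable_id.prodMk measurable_const) : Measurable fun y => (y, x))
  -- RHS: unfold withDensity
  have mF : Measurable (fun y => ∫⁻ x, A x * (pe x y / c y)) := by
    apply Measurable.lintegral_prod_right'
      (f := fun z : (Fin d → ℝ) × (Fin n → Fin d → ℝ) => A z.2 * (pe z.2 z.1 / c z.1))
    exact (mA.comp measurable_snd).mul (mpe2.div (mc.comp measurable_fst))
  have mdens : Measurable (fun y => c y * (q y : ℝ≥0∞) / h0) :=
    (mc.mul hq.coe_nnreal_ennreal).div measurable_const
  rw [lintegral_withDensity_eq_lintegral_mul ν mdens mF]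
  -- pointwise a.e. simplification of the RHS integrand
  have key : ∀ᵐ y ∂ν,
      ((fun y => c y * (q y : ℝ≥0∞) / h0) * fun y => ∫⁻ x, A x * (pe x y / c y)) y
        = ((q y : ℝ≥0∞) / h0) * ∫⁻ x, A x * pe x y := by
    filter_upwards [hppos] with y hy
    simp only [Pi.mul_apply]
    rcases eq_or_ne (q y : ℝ≥0∞) 0 with hq0 | hq0
    · simp [hq0, ENNReal.zero_div]
    · have hqpos : 0 < q y := pos_iff_ne_zero.mpr fun h => hq0 (by simp [h])
      have hcpos : c y ≠ 0 := by
        simpa [hc, pos_iff_ne_zero] using (hy hqpos).ne'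
      have hctop : c y ≠ ⊤ := coe_ne_top
      have : c y * (∫⁻ x, A x * (pe x y / c y)) = ∫⁻ x, A x * pe x y := by
        rw [mul_comm, ← lintegral_mul_const' (c y) _ hctop]
        congr 1
        ext x
        rw [mul_assoc, ENNReal.div_mul_cancel hcpos hctop]
      calc c y * (q y : ℝ≥0∞) / h0 * ∫⁻ x, A x * (pe x y / c y)
          = (q y : ℝ≥0∞) / h0 * (c y * ∫⁻ x, A x * (pe x y / c y)) := by
            rw [ENNReal.div_eq_inv_mul, ENNReal.div_eq_inv_mul]; ring
        _ = (q y : ℝ≥0∞) / h0 * ∫⁻ x, A x * pe x y := by rw [this]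
  rw [lintegral_congr_ae key]
  -- move the constant inside, swap integrals
  have hqfin : ∀ y, (q y : ℝ≥0∞) / h0 ≠ ⊤ := fun y =>
    (ENNReal.div_lt_top coe_ne_top h0ne).ne
  have step : ∀ y, ((q y : ℝ≥0∞) / h0) * ∫⁻ x, A x * pe x y
      = ∫⁻ x, ((q y : ℝ≥0∞) / h0) * (A x * pe x y) := fun y =>
    (lintegral_const_mul' _ _ (hqfin y)).symm
  simp only [step]
  rw [lintegral_lintegral_swap]; swap
  · exact (((hq.coe_nnreal_ennreal.comp measurable_fst).div measurable_const).mul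
      ((mA.comp measurable_snd).mul mpe2)).aemeasurable
  -- identify the inner integral with doobH
  apply lintegral_congr
  intro x
  have : ∀ y, ((q y : ℝ≥0∞) / h0) * (A x * pe x y)
      = A x * ((pe x y * (q y : ℝ≥0∞)) * h0⁻¹) := by
    intro y
    rw [ENNReal.div_eq_inv_mul]; ring
  simp only [this]
  rw [lintegral_const_mul (f := fun y => pe x y * (q y : ℝ≥0∞) * h0⁻¹) _ (((mpe1 x).mul hq.coe_nnreal_ennreal).mul measurable_const),
    lintegral_mul_const' _ _ (ENNReal.inv_ne_top.mpr h0ne)]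
  have : doobH p q ν T (t (Fin.last n)) (Matrix.vecCons x₀ x (Fin.last n))
      = ∫⁻ y, pe x y * (q y : ℝ≥0∞) ∂ν := rfl
  rw [this, div_eq_mul_inv]
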